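/- Fix C > 0 and G > 0 with G ≤ C. Let g : ℕ → ℝ with |g t| ≤ G for all t. Define for t ≥ 1: hatβ(t+1) = -(∑_{i=1}^t g i)/(2C²t), and β(t+1) = the projection of hatβ(t+1) onto the interval [0, 1/(C√(2t))], with β(1) = 0. Then for all t ≥ 1, |β(t+1) - β(t)| ≤ 2/(C·t). -/

import Mathlib

set_option maxHeartbeats 1000000

lemma clamp_lip (a b x y : ℝ) :
    |max 0 (min a x) - max 0 (min b y)| ≤ |a - b| + |x - y| := by
  have h1 : |max 0 (min a x) - max 0 (min b y)| ≤ max |(0:ℝ) - 0| |min a x - min b y| :=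
    abs_max_sub_max_le_max _ _ _ _
  have h2 : |min a x - min b y| ≤ max |a - b| |x - y| := abs_min_sub_min_le_max _ _ _ _
  have h3 : max |a - b| |x - y| ≤ |a - b| + |x - y| :=
    max_le (le_add_of_nonneg_right (abs_nonneg _)) (le_add_of_nonneg_left (abs_nonneg _))
  simp only [sub_self, abs_zero] at h1
  calc |max 0 (min a x) - max 0 (min b y)| ≤ max 0 |min a x - min b y| := h1
    _ = |min a x - min b y| := max_eq_right (abs_nonneg _)
    _ ≤ _ := le_trans h2 h3

/-- The projected betting fractions move slowly: `|β (t+1) - β t| ≤ 2/(C t)`. -/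
theorem stmt1 (C G : ℝ) (hC : 0 < C) (hG : 0 < G) (hGC : G ≤ C)
    (g : ℕ → ℝ) (hg : ∀ t, |g t| ≤ G)
    (β : ℕ → ℝ) (hβ1 : β 1 = 0)
    (hβ : ∀ t : ℕ, 1 ≤ t →
      β (t + 1) = max 0 (min (1 / (C * Real.sqrt (2 * (t : ℝ))))
        (-(∑ i ∈ Finset.Icc 1 t, g i) / (2 * C ^ 2 * (t : ℝ))))) :
    ∀ t : ℕ, 1 ≤ t → |β (t + 1) - β t| ≤ 2 / (C * (t : ℝ)) := by
  have sqrt2_ge : (1:ℝ) ≤ Real.sqrt 2 := by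
    rw [show (1:ℝ) = Real.sqrt 1 from (Real.sqrt_one).symm]
    exact Real.sqrt_le_sqrt (by norm_num)
  intro t ht
  rcases Nat.lt_or_ge t 2 with h1 | h2
  · -- t = 1
    interval_cases t
    rw [hβ 1 le_rfl, hβ1, sub_zero]
    have hspos : 0 < Real.sqrt (2 * ((1:ℕ):ℝ)) := by
      push_cast; rw [mul_one]; linarith
    have ha : 0 ≤ 1 / (C * Real.sqrt (2 * ((1:ℕ):ℝ))) :=
      le_of_lt (by positivity)
    rw [abs_of_nonneg (le_max_left _ _)]
    have : max 0 (min (1 / (C * Real.sqrt (2 * ((1:ℕ):ℝ))))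
        (-(∑ i ∈ Finset.Icc 1 1, g i) / (2 * C ^ 2 * ((1:ℕ):ℝ)))) ≤
        1 / (C * Real.sqrt (2 * ((1:ℕ):ℝ))) :=
      max_le ha (min_le_left _ _)
    refine this.trans ?_
    push_cast
    rw [mul_one, mul_one]
    rw [div_le_div_iff₀ (by positivity) (by positivity)]
    nlinarith [sq_nonneg C]
  · -- t ≥ 2, write t = s + 1
    obtain ⟨s, rfl⟩ : ∃ s, t = s + 1 := ⟨t - 1, by omega⟩
    have hs1 : 1 ≤ s := by omega
    have hn1 : (1:ℝ) ≤ (s:ℝ) := by exact_mod_cast hs1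
    set n : ℝ := (s:ℝ) with hn
    have hnpos : 0 < n := by linarith
    rw [hβ (s+1) (by omega), hβ s hs1]
    set S : ℝ := ∑ i ∈ Finset.Icc 1 s, g i with hS
    have hsum : ∑ i ∈ Finset.Icc 1 (s+1), g i = S + g (s+1) := by
      rw [hS, Finset.sum_Icc_succ_top (by omega)]
    have hScast : ((s:ℕ) + 1 : ℕ) = s + 1 := rfl
    have hcast : (((s:ℕ)+1 : ℕ) : ℝ) = n + 1 := by push_cast; ring
    rw [hsum, hcast]
    set a : ℝ := 1 / (C * Real.sqrt (2 * (n+1))) with ha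
    set b : ℝ := 1 / (C * Real.sqrt (2 * n)) with hb
    set x : ℝ := -(S + g (s+1)) / (2 * C ^ 2 * (n+1)) with hx
    set y : ℝ := -S / (2 * C ^ 2 * n) with hy
    have key := clamp_lip a b x y
    -- bound |a - b|
    set u : ℝ := Real.sqrt (2 * n) with hu
    set v : ℝ := Real.sqrt (2 * (n+1)) with hv
    have hu2 : u ^ 2 = 2 * n := Real.sq_sqrt (by linarith)
    have hv2 : v ^ 2 = 2 * (n+1) := Real.sq_sqrt (by linarith)
    have huv : u ≤ v := Real.sqrt_le_sqrt (by linarith)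
    have hu1 : (1:ℝ) ≤ u := by
      rw [hu, show (1:ℝ) = Real.sqrt 1 from (Real.sqrt_one).symm]
      exact Real.sqrt_le_sqrt (by linarith)
    have hupos : 0 < u := by linarith
    have hvpos : 0 < v := by linarith
    have keyineq : v * (n+1) ≤ u * (n+1) + u * v := by
      nlinarith [mul_le_mul_of_nonneg_left huv (le_of_lt hupos),
        mul_le_mul_of_nonneg_left huv (le_of_lt hvpos), sq_nonneg (v - u),
        mul_nonneg (sub_nonneg.2 huv) (le_of_lt hvpos)]
    have hab : |a - b| ≤ 1 / (C * (n+1)) := by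
      have hba : a ≤ b := by
        rw [ha, hb]
        apply div_le_div_of_nonneg_left (by norm_num) (by positivity)
        exact mul_le_mul_of_nonneg_left huv (le_of_lt hC)
      rw [abs_of_nonpos (by linarith), neg_sub]
      rw [hb, ha, div_sub_div _ _ (by positivity) (by positivity),
        div_le_div_iff₀ (by positivity) (by positivity)]
      nlinarith [sq_nonneg C, mul_pos hC hnpos, mul_pos hupos hvpos,
        mul_le_mul_of_nonneg_left keyineq (le_of_lt (mul_pos hC hC))]
    -- bound |x - y|
    have hSb : |S| ≤ G * n := by
      calc |S| ≤ ∑ i ∈ Finset.Icc 1 s, |g i| := Finset.abs_sum_le_sum_abs _ _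
        _ ≤ ∑ i ∈ Finset.Icc 1 s, G := Finset.sum_le_sum (fun i _ => hg i)
        _ = s * G := by rw [Finset.sum_const, Nat.card_Icc]; simp [nsmul_eq_mul]
        _ = G * n := by rw [hn]; ring
    have hxy : |x - y| ≤ 1 / (C * (n+1)) := by
      have hdiff : x - y = (S - g (s+1) * n) / (2 * C ^ 2 * n * (n+1)) := by
        rw [hx, hy]; field_simp; ring
      have hden : (0:ℝ) < 2 * C ^ 2 * n * (n + 1) :=
        mul_pos (mul_pos (mul_pos two_pos (pow_pos hC 2)) hnpos) (by linarith)
      rw [hdiff, abs_div, abs_of_pos hden]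
      rw [div_le_div_iff₀ hden (mul_pos hC (by linarith))]
      have hnum : |S - g (s+1) * n| ≤ 2 * G * n := by
        calc |S - g (s+1) * n| ≤ |S| + |g (s+1) * n| := abs_sub _ _
          _ ≤ G * n + G * n := by
              refine add_le_add hSb ?_
              rw [abs_mul, abs_of_pos hnpos]
              exact mul_le_mul_of_nonneg_right (hg _) (le_of_lt hnpos)
          _ = 2 * G * n := by ring
      nlinarith [mul_pos hC hnpos, mul_pos hnpos hnpos, mul_pos hC (mul_pos hnpos hnpos),
        mul_le_mul_of_nonneg_right hnum (le_of_lt (mul_pos hC hnpos)),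
        mul_le_mul_of_nonneg_right hGC (le_of_lt (mul_pos hC (mul_pos hnpos hnpos)))]
    calc |max 0 (min a x) - max 0 (min b y)| ≤ |a - b| + |x - y| := key
      _ ≤ 1 / (C * (n+1)) + 1 / (C * (n+1)) := add_le_add hab hxy
      _ = 2 / (C * (n+1)) := by ring
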